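/- arXiv:2410.21785 — 2 statements merged into one kernel-verified Lean document; each statement's English description precedes it below -/
import Mathlib

section
/- For any non-negative real numbers $a$ and $d$ with $a + d < 1$ and any fixed $t \in (0, T]$, there exists a constant $C > 0$ (independent of $\rho$) such that for all $\rho \ge 1$, $\int_0^t e^{-\rho(t-r)} (t-r)^{-a} r^{-d}\,dr \le C \rho^{a+d-1}$. -/
open MeasureTheory Set Real

theorem stmt_2 (a d t : ℝ) (ha : 0 ≤ a) (hd : 0 ≤ d) (had : a + d < 1) (ht : 0 < t) :
    ∃ C > 0, ∀ ρ : ℝ, 1 ≤ ρ →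
      ∫ r in (0:ℝ)..t, Real.exp (-ρ * (t - r)) * (t - r) ^ (-a) * r ^ (-d) ≤
        C * ρ ^ (a + d - 1) := by
  set m : ℝ := t / 2 with hm
  have hm0 : 0 < m := by positivity
  have hmt : m < t := by rw [hm]; linarith
  have h1a : 0 < 1 - a := by linarith
  have h1d : 0 < 1 - d := by linarith
  have hΓ : 0 < Real.Gamma (1 - a) := Real.Gamma_pos_of_pos h1a
  have hC1 : 0 < m ^ (-a) * m ^ (-d) / (1 - d) := by positivity
  have hC2 : 0 < m ^ (-d) * Real.Gamma (1 - a) := by positivity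
  refine ⟨m ^ (-a) * m ^ (-d) / (1 - d) + m ^ (-d) * Real.Gamma (1 - a),
    by linarith, ?_⟩
  intro ρ hρ
  have hρ0 : (0:ℝ) < ρ := lt_of_lt_of_le one_pos hρ
  set f : ℝ → ℝ := fun r => Real.exp (-ρ * (t - r)) * (t - r) ^ (-a) * r ^ (-d) with hf
  have hmeas : ∀ u v : ℝ, 0 ≤ u → v ≤ t →
      AEStronglyMeasurable f (volume.restrict (Ioc u v)) := by
    intro u v hu hv
    rw [← Measure.restrict_congr_set Ioo_ae_eq_Ioc]
    apply ContinuousOn.aestronglyMeasurable _ measurableSet_Ioo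
    intro x hx
    have hx0 : 0 < x := lt_of_le_of_lt hu hx.1
    have hxt : 0 < t - x := sub_pos.2 (lt_of_lt_of_le hx.2 hv)
    apply ContinuousAt.continuousWithinAt
    apply ContinuousAt.mul
    apply ContinuousAt.mul
    · exact (Real.continuous_exp.continuousAt).comp
        ((continuousAt_const.mul (continuousAt_const.sub continuousAt_id)))
    · exact (Real.continuousAt_rpow_const _ _ (Or.inl hxt.ne')).comp
        (continuousAt_const.sub continuousAt_id)
    · exact Real.continuousAt_rpow_const _ _ (Or.inl hx0.ne')
  -- integrability on [0, m]
  have hg1 : IntervalIntegrable (fun x : ℝ => m ^ (-a) * x ^ (-d)) volume 0 m :=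
    (intervalIntegral.intervalIntegrable_rpow' (by linarith : (-1:ℝ) < -d)).const_mul _
  have hbound1 : ∀ x ∈ Ioc (0:ℝ) m, f x ≤ m ^ (-a) * x ^ (-d) := by
    intro x hx
    have hx0 : 0 < x := hx.1
    have hxm : x ≤ m := hx.2
    have htx : 0 < t - x := by linarith
    have h1 : Real.exp (-ρ * (t - x)) ≤ 1 := by
      rw [Real.exp_le_one_iff]
      nlinarith
    have h2 : (t - x) ^ (-a) ≤ m ^ (-a) :=
      Real.rpow_le_rpow_of_nonpos hm0 (by linarith) (by linarith)
    have h3 : (0:ℝ) ≤ x ^ (-d) := Real.rpow_nonneg hx0.le _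
    calc Real.exp (-ρ * (t - x)) * (t - x) ^ (-a) * x ^ (-d)
        ≤ 1 * m ^ (-a) * x ^ (-d) := by
          apply mul_le_mul_of_nonneg_right _ h3
          apply mul_le_mul h1 h2 (Real.rpow_nonneg htx.le _) zero_le_one
      _ = m ^ (-a) * x ^ (-d) := by ring
  have hI1 : IntervalIntegrable f volume 0 m := by
    apply hg1.mono_fun (by rw [uIoc_of_le hm0.le]; exact hmeas 0 m le_rfl hmt.le)
    rw [Filter.EventuallyLE, ae_restrict_iff' measurableSet_uIoc]
    apply ae_of_all
    intro x hx
    rw [uIoc_of_le hm0.le] at hx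
    have hx0 : 0 < x := hx.1
    have htx : 0 < t - x := by linarith [hx.2]
    have hfx : 0 ≤ f x := by
      apply mul_nonneg (mul_nonneg (Real.exp_nonneg _) (Real.rpow_nonneg htx.le _))
        (Real.rpow_nonneg hx0.le _)
    rw [Real.norm_eq_abs, Real.norm_eq_abs, abs_of_nonneg hfx,
      abs_of_nonneg (mul_nonneg (Real.rpow_nonneg hm0.le _) (Real.rpow_nonneg hx0.le _))]
    exact hbound1 x hx
  -- integrability on [m, t]
  have hGint : IntegrableOn (fun s : ℝ => s ^ (-a) * Real.exp (-ρ * s)) (Ioi 0) volume := by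
    have := integrableOn_rpow_mul_exp_neg_mul_rpow
      (p := 1) (by linarith : (-1:ℝ) < -a) one_pos hρ0
    apply this.congr_fun _ measurableSet_Ioi
    intro x hx
    simp [Real.rpow_one]
  have hh_int : IntervalIntegrable (fun s : ℝ => s ^ (-a) * Real.exp (-ρ * s))
      volume 0 m := by
    rw [intervalIntegrable_iff_integrableOn_Ioc_of_le hm0.le]
    exact hGint.mono_set Ioc_subset_Ioi_self
  have hg2' : IntervalIntegrable (fun x : ℝ => (t - x) ^ (-a) * Real.exp (-ρ * (t - x)))
      volume m t := by
    have := (hh_int.comp_sub_left t).symm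
    have hmm : t - m = m := by rw [hm]; ring
    simpa [hmm] using this
  have hg2 : IntervalIntegrable
      (fun x : ℝ => m ^ (-d) * ((t - x) ^ (-a) * Real.exp (-ρ * (t - x)))) volume m t :=
    hg2'.const_mul _
  have hbound2 : ∀ x ∈ Icc m t,
      f x ≤ m ^ (-d) * ((t - x) ^ (-a) * Real.exp (-ρ * (t - x))) := by
    intro x hx
    have hx0 : 0 < x := lt_of_lt_of_le hm0 hx.1
    have htx : 0 ≤ t - x := by linarith [hx.2]
    have h3 : x ^ (-d) ≤ m ^ (-d) :=
      Real.rpow_le_rpow_of_nonpos hm0 hx.1 (by linarith)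
    calc Real.exp (-ρ * (t - x)) * (t - x) ^ (-a) * x ^ (-d)
        ≤ Real.exp (-ρ * (t - x)) * (t - x) ^ (-a) * m ^ (-d) := by
          apply mul_le_mul_of_nonneg_left h3
          exact mul_nonneg (Real.exp_nonneg _) (Real.rpow_nonneg htx _)
      _ = m ^ (-d) * ((t - x) ^ (-a) * Real.exp (-ρ * (t - x))) := by ring
  have hI2 : IntervalIntegrable f volume m t := by
    apply hg2.mono_fun (by rw [uIoc_of_le hmt.le]; exact hmeas m t hm0.le le_rfl)
    rw [Filter.EventuallyLE, ae_restrict_iff' measurableSet_uIoc]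
    apply ae_of_all
    intro x hx
    rw [uIoc_of_le hmt.le] at hx
    have hx0 : 0 < x := lt_trans hm0 hx.1
    have htx : 0 ≤ t - x := by linarith [hx.2]
    have hfx : 0 ≤ f x :=
      mul_nonneg (mul_nonneg (Real.exp_nonneg _) (Real.rpow_nonneg htx _))
        (Real.rpow_nonneg hx0.le _)
    rw [Real.norm_eq_abs, Real.norm_eq_abs, abs_of_nonneg hfx, abs_of_nonneg]
    · exact hbound2 x ⟨hx.1.le, hx.2⟩
    · exact mul_nonneg (Real.rpow_nonneg hm0.le _)
        (mul_nonneg (Real.rpow_nonneg htx _) (Real.exp_nonneg _))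
  -- split the integral
  have hsplit : ∫ r in (0:ℝ)..t, f r = (∫ r in (0:ℝ)..m, f r) + ∫ r in m..t, f r :=
    (intervalIntegral.integral_add_adjacent_intervals hI1 hI2).symm
  -- bound piece 1
  have hexp : Real.exp (-ρ * m) ≤ m⁻¹ * ρ ^ (a + d - 1) := by
    have h1 : ρ * m ≤ Real.exp (ρ * m) := by
      have := Real.add_one_le_exp (ρ * m)
      linarith
    have h2 : Real.exp (-ρ * m) ≤ (ρ * m)⁻¹ := by
      rw [neg_mul, Real.exp_neg]
      exact inv_anti₀ (by positivity) h1
    have h3 : (ρ * m)⁻¹ = m⁻¹ * ρ ^ (-1 : ℝ) := by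
      rw [Real.rpow_neg_one, mul_inv]
      ring
    have h4 : ρ ^ (-1:ℝ) ≤ ρ ^ (a + d - 1) :=
      Real.rpow_le_rpow_of_exponent_le hρ (by linarith)
    calc Real.exp (-ρ * m) ≤ (ρ * m)⁻¹ := h2
      _ = m⁻¹ * ρ ^ (-1 : ℝ) := h3
      _ ≤ m⁻¹ * ρ ^ (a + d - 1) := by
          apply mul_le_mul_of_nonneg_left h4 (by positivity)
  have hp1 : ∫ r in (0:ℝ)..m, f r ≤
      m ^ (-a) * m ^ (-d) / (1 - d) * ρ ^ (a + d - 1) := by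
    have step1 : ∫ r in (0:ℝ)..m, f r ≤
        ∫ x in (0:ℝ)..m, m ^ (-a) * Real.exp (-ρ * m) * x ^ (-d) := by
      apply intervalIntegral.integral_mono_on hm0.le hI1
        ((intervalIntegral.intervalIntegrable_rpow' (by linarith : (-1:ℝ) < -d)).const_mul _)
      intro x hx
      have hx0 : 0 ≤ x := hx.1
      have htx : 0 < t - x := by
        have := hx.2; rw [hm] at *; linarith
      have hmx : m ≤ t - x := by
        have := hx.2; linarith
      have h1 : Real.exp (-ρ * (t - x)) ≤ Real.exp (-ρ * m) := by
        apply Real.exp_le_exp.2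
        nlinarith
      have h2 : (t - x) ^ (-a) ≤ m ^ (-a) :=
        Real.rpow_le_rpow_of_nonpos hm0 hmx (by linarith)
      calc Real.exp (-ρ * (t - x)) * (t - x) ^ (-a) * x ^ (-d)
          ≤ Real.exp (-ρ * m) * m ^ (-a) * x ^ (-d) := by
            apply mul_le_mul_of_nonneg_right _ (Real.rpow_nonneg hx0 _)
            exact mul_le_mul h1 h2 (Real.rpow_nonneg htx.le _) (Real.exp_nonneg _)
        _ = m ^ (-a) * Real.exp (-ρ * m) * x ^ (-d) := by ring
    have step2 : ∫ x in (0:ℝ)..m, m ^ (-a) * Real.exp (-ρ * m) * x ^ (-d) =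
        m ^ (-a) * Real.exp (-ρ * m) * (m ^ (-d + 1) / (-d + 1)) := by
      rw [intervalIntegral.integral_const_mul, integral_rpow (Or.inl (by linarith))]
      rw [Real.zero_rpow (by linarith : -d + 1 ≠ 0)]
      ring
    have hmm : m ^ (-a) * (m⁻¹ * m ^ (-d + 1)) = m ^ (-a) * m ^ (-d) := by
      rw [Real.rpow_add hm0, Real.rpow_one]
      field_simp
    calc ∫ r in (0:ℝ)..m, f r
        ≤ m ^ (-a) * Real.exp (-ρ * m) * (m ^ (-d + 1) / (-d + 1)) := by
          rw [← step2]; exact step1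
      _ ≤ m ^ (-a) * (m⁻¹ * ρ ^ (a + d - 1)) * (m ^ (-d + 1) / (-d + 1)) := by
          apply mul_le_mul_of_nonneg_right _
            (div_nonneg (Real.rpow_nonneg hm0.le _) (by linarith))
          exact mul_le_mul_of_nonneg_left hexp (by positivity)
      _ = m ^ (-a) * m ^ (-d) / (1 - d) * ρ ^ (a + d - 1) := by
          have : m ^ (-a) * (m⁻¹ * ρ ^ (a + d - 1)) * (m ^ (-d + 1) / (-d + 1)) =
              (m ^ (-a) * (m⁻¹ * m ^ (-d + 1))) * ρ ^ (a + d - 1) / (-d + 1) := by ring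
          rw [this, hmm]
          ring_nf
  -- bound piece 2
  have hGval : ∫ s in Ioi (0:ℝ), s ^ (-a) * Real.exp (-ρ * s) =
      (1 / ρ) ^ (1 - a) * Real.Gamma (1 - a) := by
    rw [← integral_rpow_mul_exp_neg_mul_Ioi h1a hρ0]
    apply setIntegral_congr_fun measurableSet_Ioi
    intro x hx
    have h1 : 1 - a - 1 = -a := by ring
    simp [h1, neg_mul]
  have h1ρ : (1 / ρ) ^ (1 - a) ≤ ρ ^ (a + d - 1) := by
    rw [one_div, ← Real.rpow_neg_one ρ, ← Real.rpow_mul hρ0.le]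
    apply Real.rpow_le_rpow_of_exponent_le hρ
    nlinarith
  have hp2 : ∫ r in m..t, f r ≤ m ^ (-d) * Real.Gamma (1 - a) * ρ ^ (a + d - 1) := by
    have step1 : ∫ r in m..t, f r ≤
        ∫ x in m..t, m ^ (-d) * ((t - x) ^ (-a) * Real.exp (-ρ * (t - x))) := by
      apply intervalIntegral.integral_mono_on hmt.le hI2 hg2
      exact hbound2
    have step2 : ∫ x in m..t, m ^ (-d) * ((t - x) ^ (-a) * Real.exp (-ρ * (t - x))) =
        m ^ (-d) * ∫ s in (0:ℝ)..m, s ^ (-a) * Real.exp (-ρ * s) := by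
      rw [intervalIntegral.integral_const_mul]
      congr 1
      have := intervalIntegral.integral_comp_sub_left (a := m) (b := t)
        (fun s : ℝ => s ^ (-a) * Real.exp (-ρ * s)) t
      have hmm : t - m = m := by rw [hm]; ring
      rw [this, sub_self, hmm]
    have step3 : ∫ s in (0:ℝ)..m, s ^ (-a) * Real.exp (-ρ * s) ≤
        ∫ s in Ioi (0:ℝ), s ^ (-a) * Real.exp (-ρ * s) := by
      rw [intervalIntegral.integral_of_le hm0.le]
      apply setIntegral_mono_set hGint
      · rw [Filter.EventuallyLE, ae_restrict_iff' measurableSet_Ioi]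
        apply ae_of_all
        intro x hx
        exact mul_nonneg (Real.rpow_nonneg (le_of_lt hx) _) (Real.exp_nonneg _)
      · exact HasSubset.Subset.eventuallyLE Ioc_subset_Ioi_self
    calc ∫ r in m..t, f r
        ≤ m ^ (-d) * ∫ s in (0:ℝ)..m, s ^ (-a) * Real.exp (-ρ * s) := by
          rw [← step2]; exact step1
      _ ≤ m ^ (-d) * ((1 / ρ) ^ (1 - a) * Real.Gamma (1 - a)) := by
          apply mul_le_mul_of_nonneg_left _ (Real.rpow_nonneg hm0.le _)
          rw [← hGval]
          exact step3
      _ ≤ m ^ (-d) * Real.Gamma (1 - a) * ρ ^ (a + d - 1) := by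
          rw [mul_assoc]
          apply mul_le_mul_of_nonneg_left _ (Real.rpow_nonneg hm0.le _)
          rw [mul_comm (Real.Gamma (1 - a))]
          exact mul_le_mul_of_nonneg_right h1ρ hΓ.le
  rw [hsplit]
  calc (∫ r in (0:ℝ)..m, f r) + ∫ r in m..t, f r
      ≤ m ^ (-a) * m ^ (-d) / (1 - d) * ρ ^ (a + d - 1) +
        m ^ (-d) * Real.Gamma (1 - a) * ρ ^ (a + d - 1) := add_le_add hp1 hp2
    _ = (m ^ (-a) * m ^ (-d) / (1 - d) + m ^ (-d) * Real.Gamma (1 - a)) *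
        ρ ^ (a + d - 1) := by ring
end

section
/- Let $V$ be a Hilbert space and $g : V \to L(V)$ a map whose Fréchet derivative $g' : V \to L(V, L(V))$ exists and is Lipschitz continuous with constant $M_g$, and such that $g'$ is bounded by $L_g$. Then there exists a constant $C > 0$ (depending only on $L_g, M_g$) such that for all $x_1, x_2, y_1, y_2 \in V$ and all unit vectors $e \in V$: $\|g(x_1)e - g(x_2)e - g(y_1)e + g(y_2)e\| \le C\|x_1 - x_2 - y_1 + y_2\| + C\|x_1 - x_2\|\big(\|x_1 - y_1\| + \|x_2 - y_2\|\big)$. -/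
/-- If `g : V → L(V)` has a Lipschitz continuous and bounded Fréchet derivative, then for
unit vectors `e`:
`‖g(x₁)e - g(x₂)e - g(y₁)e + g(y₂)e‖ ≤ C‖x₁-x₂-y₁+y₂‖ + C‖x₁-x₂‖(‖x₁-y₁‖+‖x₂-y₂‖)`. -/
theorem stmt_9 {V : Type*} [NormedAddCommGroup V] [InnerProductSpace ℝ V]
    (g : V → V →L[ℝ] V) (g' : V → V →L[ℝ] (V →L[ℝ] V)) (Lg Mg : ℝ)
    (hderiv : ∀ x, HasFDerivAt g (g' x) x)
    (hbound : ∀ x, ‖g' x‖ ≤ Lg)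
    (hlip : ∀ x₁ x₂ : V, ∀ e : V, ‖e‖ = 1 →
      ‖g' x₁ e - g' x₂ e‖ ≤ Mg * ‖x₁ - x₂‖) :
    ∃ C > 0, ∀ x₁ x₂ y₁ y₂ e : V, ‖e‖ = 1 →
      ‖g x₁ e - g x₂ e - g y₁ e + g y₂ e‖ ≤
        C * ‖x₁ - x₂ - y₁ + y₂‖ + C * ‖x₁ - x₂‖ * (‖x₁ - y₁‖ + ‖x₂ - y₂‖) := by
  have hLg0 : 0 ≤ Lg := le_trans (norm_nonneg (g' 0)) (hbound 0)
  refine ⟨Lg + |Mg| + 1, by positivity, ?_⟩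
  intro x₁ x₂ y₁ y₂ e he
  -- scaled Lipschitz estimate for g'
  have key : ∀ a b h : V, ‖g' a h - g' b h‖ ≤ |Mg| * (‖a - b‖ * ‖h‖) := by
    intro a b h
    rcases eq_or_ne h 0 with rfl | hh
    · simp
    · have hn : (0:ℝ) < ‖h‖ := norm_pos_iff.mpr hh
      set e' : V := ‖h‖⁻¹ • h with he'def
      have he' : ‖e'‖ = 1 := by
        rw [he'def, norm_smul, norm_inv, norm_norm]
        field_simp
      have hh' : h = ‖h‖ • e' := by
        rw [he'def, smul_smul]
        field_simp
        rw [one_smul]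
      have h1 : ‖g' a e' - g' b e'‖ ≤ Mg * ‖a - b‖ := hlip a b e' he'
      have h2 : g' a h - g' b h = ‖h‖ • (g' a e' - g' b e') := by
        conv_lhs => rw [hh']
        simp [smul_sub]
      rw [h2]
      refine le_trans (ContinuousLinearMap.opNorm_smul_le (‖h‖) (g' a e' - g' b e')) ?_
      rw [Real.norm_eq_abs, abs_of_nonneg hn.le]
      calc ‖h‖ * ‖g' a e' - g' b e'‖ ≤ ‖h‖ * (Mg * ‖a - b‖) := by
            exact mul_le_mul_of_nonneg_left h1 (le_of_lt hn)
        _ ≤ ‖h‖ * (|Mg| * ‖a - b‖) := by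
            have : Mg * ‖a - b‖ ≤ |Mg| * ‖a - b‖ :=
              mul_le_mul_of_nonneg_right (le_abs_self Mg) (norm_nonneg _)
            exact mul_le_mul_of_nonneg_left this (le_of_lt hn)
        _ = |Mg| * (‖a - b‖ * ‖h‖) := by ring
  -- derivative of z ↦ g z e
  have hApp : ∀ w : V, HasFDerivAt (fun z => g z e)
      ((ContinuousLinearMap.apply ℝ V e).comp (g' w)) w :=
    fun w => (ContinuousLinearMap.apply ℝ V e).hasFDerivAt.comp w (hderiv w)
  -- g(·)e is Lg-Lipschitz
  have hgl : ∀ a b : V, ‖g a e - g b e‖ ≤ Lg * ‖a - b‖ := by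
    intro a b
    refine Convex.norm_image_sub_le_of_norm_hasFDerivWithin_le
      (f := fun z => g z e) (f' := fun w => (ContinuousLinearMap.apply ℝ V e).comp (g' w))
      (fun w _ => (hApp w).hasFDerivWithinAt) ?_ convex_univ (Set.mem_univ b) (Set.mem_univ a)
    intro w _
    refine ContinuousLinearMap.opNorm_le_bound _ hLg0 (fun h => ?_)
    calc ‖g' w h e‖ ≤ ‖g' w h‖ * ‖e‖ := ContinuousLinearMap.le_opNorm _ _
      _ = ‖g' w h‖ := by rw [he, mul_one]
      _ ≤ ‖g' w‖ * ‖h‖ := ContinuousLinearMap.le_opNorm _ _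
      _ ≤ Lg * ‖h‖ := mul_le_mul_of_nonneg_right (hbound w) (norm_nonneg _)
  -- mean value estimate for f z = g(x₂+z)e - g(y₂+z)e
  have hf : ∀ z : V, HasFDerivAt (fun z => g (x₂ + z) e - g (y₂ + z) e)
      ((ContinuousLinearMap.apply ℝ V e).comp (g' (x₂ + z))
        - (ContinuousLinearMap.apply ℝ V e).comp (g' (y₂ + z))) z := by
    intro z
    have ht₁ : HasFDerivAt (fun z : V => x₂ + z) (ContinuousLinearMap.id ℝ V) z :=
      (hasFDerivAt_id z).const_add x₂
    have ht₂ : HasFDerivAt (fun z : V => y₂ + z) (ContinuousLinearMap.id ℝ V) z :=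
      (hasFDerivAt_id z).const_add y₂
    have h₁ := (hApp (x₂ + z)).comp z ht₁
    have h₂ := (hApp (y₂ + z)).comp z ht₂
    have h₃ := h₁.sub h₂
    simp at h₃
    exact h₃
  have hmv : ‖(g (x₂ + (x₁ - x₂)) e - g (y₂ + (x₁ - x₂)) e) - (g (x₂ + 0) e - g (y₂ + 0) e)‖
      ≤ (|Mg| * ‖x₂ - y₂‖) * ‖(x₁ - x₂) - 0‖ := by
    refine Convex.norm_image_sub_le_of_norm_hasFDerivWithin_le
      (fun z _ => (hf z).hasFDerivWithinAt) ?_ convex_univ (Set.mem_univ 0) (Set.mem_univ (x₁ - x₂))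
    intro z _
    refine ContinuousLinearMap.opNorm_le_bound _ (by positivity) (fun h => ?_)
    have h3 : ((ContinuousLinearMap.apply ℝ V e).comp (g' (x₂ + z))
        - (ContinuousLinearMap.apply ℝ V e).comp (g' (y₂ + z))) h
        = (g' (x₂ + z) h - g' (y₂ + z) h) e := by
      simp
    rw [h3]
    calc ‖(g' (x₂ + z) h - g' (y₂ + z) h) e‖
        ≤ ‖g' (x₂ + z) h - g' (y₂ + z) h‖ * ‖e‖ := ContinuousLinearMap.le_opNorm _ _
      _ = ‖g' (x₂ + z) h - g' (y₂ + z) h‖ := by rw [he, mul_one]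
      _ ≤ |Mg| * (‖(x₂ + z) - (y₂ + z)‖ * ‖h‖) := key _ _ _
      _ = |Mg| * ‖x₂ - y₂‖ * ‖h‖ := by rw [show (x₂ + z) - (y₂ + z) = x₂ - y₂ by abel]; ring
  -- estimate the residual term
  have hres : ‖g (y₂ + (x₁ - x₂)) e - g y₁ e‖ ≤ Lg * ‖x₁ - x₂ - y₁ + y₂‖ := by
    have := hgl (y₂ + (x₁ - x₂)) y₁
    rwa [show (y₂ + (x₁ - x₂)) - y₁ = x₁ - x₂ - y₁ + y₂ by abel] at this
  -- combine
  have hsplit : g x₁ e - g x₂ e - g y₁ e + g y₂ e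
      = ((g (x₂ + (x₁ - x₂)) e - g (y₂ + (x₁ - x₂)) e) - (g (x₂ + 0) e - g (y₂ + 0) e))
        + (g (y₂ + (x₁ - x₂)) e - g y₁ e) := by
    simp
    abel
  rw [hsplit]
  have htri := norm_add_le ((g (x₂ + (x₁ - x₂)) e - g (y₂ + (x₁ - x₂)) e) - (g (x₂ + 0) e - g (y₂ + 0) e))
    (g (y₂ + (x₁ - x₂)) e - g y₁ e)
  have hu0 : ‖(x₁ - x₂) - 0‖ = ‖x₁ - x₂‖ := by rw [sub_zero]
  rw [hu0] at hmv
  have hMabs : (0:ℝ) ≤ |Mg| := abs_nonneg Mg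
  have h1 : ‖x₂ - y₂‖ ≤ ‖x₁ - y₁‖ + ‖x₂ - y₂‖ := le_add_of_nonneg_left (norm_nonneg _)
  have h2 : |Mg| * ‖x₂ - y₂‖ * ‖x₁ - x₂‖ ≤ |Mg| * ‖x₁ - x₂‖ * (‖x₁ - y₁‖ + ‖x₂ - y₂‖) := by
    have := mul_le_mul_of_nonneg_left h1 (mul_nonneg hMabs (norm_nonneg (x₁ - x₂)))
    nlinarith
  have h3 : Lg * ‖x₁ - x₂ - y₁ + y₂‖ ≤ (Lg + |Mg| + 1) * ‖x₁ - x₂ - y₁ + y₂‖ := by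
    nlinarith [norm_nonneg (x₁ - x₂ - y₁ + y₂), mul_nonneg hMabs (norm_nonneg (x₁ - x₂ - y₁ + y₂))]
  have h4 : |Mg| * ‖x₁ - x₂‖ * (‖x₁ - y₁‖ + ‖x₂ - y₂‖)
      ≤ (Lg + |Mg| + 1) * ‖x₁ - x₂‖ * (‖x₁ - y₁‖ + ‖x₂ - y₂‖) := by
    have hnn : (0:ℝ) ≤ ‖x₁ - x₂‖ * (‖x₁ - y₁‖ + ‖x₂ - y₂‖) :=
      mul_nonneg (norm_nonneg _) (add_nonneg (norm_nonneg _) (norm_nonneg _))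
    nlinarith [mul_nonneg hLg0 hnn, hnn]
  linarith
end
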